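/- Let (p'_1,…,p'_κ) be an optimal solution to the unrestricted price-setting subproblem (minimize ∑_{k=1}^{κ} ∑_{d∈D_k} t_d |r_d − p_k| over p_k ≥ 0, without monotonicity). If p'_k > p'_{k+1} for some k ∈ {1,…,κ−1}, then there exists an optimal solution (p*_1,…,p*_κ) to the monotone price-setting subproblem (with the additional constraints 0 ≤ p*_1 ≤ … ≤ p*_κ) satisfying p*_k = p*_{k+1}. -/
import Mathlib


open scoped Classical

/-- Objective of the price-setting subproblem. -/
noncomputable def psObj {ι : Type*} (κ : ℕ) (Dk : Fin κ → Finset ι) (r : ι → ℝ)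
    (t : ι → ℕ) (p : Fin κ → ℝ) : ℝ :=
  ∑ k : Fin κ, ∑ d ∈ Dk k, (t d : ℝ) * |r d - p k|

lemma psF_convex {ι : Type*} (D : Finset ι) (r : ι → ℝ) (t : ι → ℕ) :
    ConvexOn ℝ Set.univ (fun x : ℝ => ∑ d ∈ D, (t d : ℝ) * |r d - x|) := by
  refine ⟨convex_univ, ?_⟩
  intro x _ y _ a b ha hb hab
  simp only [smul_eq_mul, Finset.mul_sum]
  rw [← Finset.sum_add_distrib]
  refine Finset.sum_le_sum fun d _ => ?_
  have h1 : r d - (a * x + b * y) = a * (r d - x) + b * (r d - y) := by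
    linear_combination (-(r d)) * hab
  calc (t d : ℝ) * |r d - (a * x + b * y)|
      = (t d : ℝ) * |a * (r d - x) + b * (r d - y)| := by rw [h1]
    _ ≤ (t d : ℝ) * (a * |r d - x| + b * |r d - y|) := by
        refine mul_le_mul_of_nonneg_left ?_ (by positivity)
        calc |a * (r d - x) + b * (r d - y)| ≤ |a * (r d - x)| + |b * (r d - y)| := abs_add_le _ _
          _ = a * |r d - x| + b * |r d - y| := by
              rw [abs_mul, abs_mul, abs_of_nonneg ha, abs_of_nonneg hb]
    _ = a * ((t d : ℝ) * |r d - x|) + b * ((t d : ℝ) * |r d - y|) := by ring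

lemma convex_le_of_mem_uIcc (F : ℝ → ℝ) (hF : ConvexOn ℝ Set.univ F) {m x y : ℝ}
    (hm : F m ≤ F y) (hx : x ∈ Set.uIcc m y) : F x ≤ F y := by
  rw [← segment_eq_uIcc] at hx
  obtain ⟨a, b, ha, hb, hab, rfl⟩ := hx
  calc F (a • m + b • y) ≤ a * F m + b * F y := hF.2 trivial trivial ha hb hab
    _ ≤ a * F y + b * F y := by nlinarith
    _ = F y := by rw [← add_mul, hab, one_mul]

/-- If an optimal solution to the unrestricted price-setting subproblem has two
consecutive prices in decreasing order, then there is an optimal solution to the monotone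
price-setting subproblem in which these two prices are equal. -/
theorem monotone_optimal_solution_with_equality {ι : Type*} (κ : ℕ)
    (Dk : Fin κ → Finset ι) (r : ι → ℝ) (t : ι → ℕ)
    (hr : ∀ k, ∀ d ∈ Dk k, 0 ≤ r d) (ht : ∀ k, ∀ d ∈ Dk k, 1 ≤ t d)
    (hdisj : ∀ k k' : Fin κ, k ≠ k' → Disjoint (Dk k) (Dk k'))
    (p' : Fin κ → ℝ) (hp'0 : ∀ k, 0 ≤ p' k)
    (hopt' : ∀ q : Fin κ → ℝ, (∀ k, 0 ≤ q k) → psObj κ Dk r t p' ≤ psObj κ Dk r t q)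
    (k : ℕ) (hk : k + 1 < κ)
    (hdec : p' ⟨k + 1, hk⟩ < p' ⟨k, Nat.lt_of_succ_lt hk⟩) :
    ∃ p : Fin κ → ℝ, (∀ j, 0 ≤ p j) ∧ Monotone p ∧
      (∀ q : Fin κ → ℝ, (∀ j, 0 ≤ q j) → Monotone q →
        psObj κ Dk r t p ≤ psObj κ Dk r t q) ∧
      p ⟨k, Nat.lt_of_succ_lt hk⟩ = p ⟨k + 1, hk⟩ := by
  classical
  set k₀ : Fin κ := ⟨k, Nat.lt_of_succ_lt hk⟩ with hk₀
  set k₁ : Fin κ := ⟨k + 1, hk⟩ with hk₁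
  set F : Fin κ → ℝ → ℝ := fun j x => ∑ d ∈ Dk j, (t d : ℝ) * |r d - x| with hF
  have hobj : ∀ q : Fin κ → ℝ, psObj κ Dk r t q = ∑ j : Fin κ, F j (q j) := fun q => rfl
  have hFconv : ∀ j : Fin κ, ConvexOn ℝ Set.univ (F j) := fun j => psF_convex (Dk j) r t
  -- each coordinate of p' minimizes F j over nonnegative reals
  have hmin : ∀ j : Fin κ, ∀ x : ℝ, 0 ≤ x → F j (p' j) ≤ F j x := by
    intro j x hx
    have hq0 : ∀ i, 0 ≤ Function.update p' j x i := by
      intro i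
      rcases eq_or_ne i j with rfl | h
      · simpa using hx
      · simpa [Function.update_of_ne h] using hp'0 i
    have h := hopt' (Function.update p' j x) hq0
    rw [hobj, hobj] at h
    have e1 : ∑ i : Fin κ, F i (Function.update p' j x i)
        = F j x + ∑ i ∈ Finset.univ.erase j, F i (p' i) := by
      rw [← Finset.add_sum_erase _ _ (Finset.mem_univ j)]
      simp only [Function.update_self]
      congr 1
      refine Finset.sum_congr rfl fun i hi => ?_
      rw [Function.update_of_ne (Finset.ne_of_mem_erase hi)]
    have e2 : ∑ i : Fin κ, F i (p' i)
        = F j (p' j) + ∑ i ∈ Finset.univ.erase j, F i (p' i) :=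
      (Finset.add_sum_erase _ _ (Finset.mem_univ j)).symm
    rw [e1, e2] at h
    linarith
  -- bound on reference prices
  set T : Finset ι := Finset.univ.biUnion Dk with hT
  set M : ℝ := ∑ d ∈ T, |r d| with hM
  have hM0 : 0 ≤ M := Finset.sum_nonneg fun d _ => abs_nonneg _
  have hrM : ∀ j : Fin κ, ∀ d ∈ Dk j, r d ≤ M := by
    intro j d hd
    have hdT : d ∈ T := Finset.mem_biUnion.2 ⟨j, Finset.mem_univ j, hd⟩
    exact le_trans (le_abs_self _)
      (Finset.single_le_sum (fun i _ => abs_nonneg (r i)) hdT)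
  -- the compact feasible set
  set S : Set (Fin κ → ℝ) :=
    {p | Monotone p} ∩ Set.pi Set.univ (fun _ : Fin κ => Set.Icc (0:ℝ) M) with hS
  have hclosed : IsClosed {p : Fin κ → ℝ | Monotone p} := by
    have : {p : Fin κ → ℝ | Monotone p}
        = ⋂ (i : Fin κ) (j : Fin κ) (_ : i ≤ j), {p : Fin κ → ℝ | p i ≤ p j} := by
      ext p
      simp only [Set.mem_setOf_eq, Set.mem_iInter]
      exact ⟨fun h i j hij => h hij, fun h i j hij => h i j hij⟩
    rw [this]
    exact isClosed_iInter fun i => isClosed_iInter fun j => isClosed_iInter fun _ =>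
      isClosed_le (continuous_apply i) (continuous_apply j)
  have hScomp : IsCompact S := by
    have hK : IsCompact (Set.pi Set.univ (fun _ : Fin κ => Set.Icc (0:ℝ) M)) :=
      isCompact_univ_pi fun _ => isCompact_Icc
    exact hK.inter_left hclosed
  have hSne : S.Nonempty := by
    refine ⟨fun _ => 0, monotone_const, ?_⟩
    intro i _
    exact ⟨le_refl 0, hM0⟩
  have hcont : Continuous (psObj κ Dk r t) := by
    unfold psObj
    refine continuous_finset_sum _ fun j _ => continuous_finset_sum _ fun d _ => ?_
    exact continuous_const.mul ((continuous_const.sub (continuous_apply j)).abs)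
  obtain ⟨P, hPS, hPmin⟩ := hScomp.exists_isMinOn hSne hcont.continuousOn
  obtain ⟨hPmono, hPIcc⟩ := hPS
  have hP0 : ∀ j, 0 ≤ P j := fun j => (hPIcc j (Set.mem_univ j)).1
  have hPM : ∀ j, P j ≤ M := fun j => (hPIcc j (Set.mem_univ j)).2
  -- P is optimal among all monotone nonnegative price lists
  have hPopt : ∀ q : Fin κ → ℝ, (∀ j, 0 ≤ q j) → Monotone q →
      psObj κ Dk r t P ≤ psObj κ Dk r t q := by
    intro q hq0 hqmono
    set q' : Fin κ → ℝ := fun j => min (q j) M with hq'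
    have hq'S : q' ∈ S := by
      constructor
      · intro i j hij
        exact min_le_min (hqmono hij) le_rfl
      · intro i _
        exact ⟨le_min (hq0 i) hM0, min_le_right _ _⟩
    have h1 : psObj κ Dk r t P ≤ psObj κ Dk r t q' := hPmin hq'S
    have h2 : psObj κ Dk r t q' ≤ psObj κ Dk r t q := by
      rw [hobj, hobj]
      refine Finset.sum_le_sum fun j _ => Finset.sum_le_sum fun d hd => ?_
      refine mul_le_mul_of_nonneg_left ?_ (by positivity)
      rcases le_total (q j) M with hqM | hMq
      · simp [hq', min_eq_left hqM]
      · have : q' j = M := min_eq_right hMq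
        rw [this]
        have h3 : r d ≤ M := hrM j d hd
        rw [abs_of_nonpos (by linarith), abs_of_nonpos (by linarith)]
        linarith
    linarith
  -- the exchange step
  set a : ℝ := P k₀ with ha
  set b : ℝ := P k₁ with hb
  have hab : a ≤ b := hPmono (by simp [hk₀, hk₁, Fin.mk_le_mk])
  set m₁ : ℝ := p' k₁ with hm₁
  set c : ℝ := max a (min b m₁) with hc
  have hac : a ≤ c := le_max_left _ _
  have hcb : c ≤ b := max_le hab (min_le_left _ _)
  have hc0 : 0 ≤ c := le_trans (hP0 k₀) hac
  -- new price list
  set p : Fin κ → ℝ := fun j => if k ≤ j.val ∧ j.val ≤ k + 1 then c else P j with hp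
  have hpk₀ : p k₀ = c := by simp [hp, hk₀]
  have hpk₁ : p k₁ = c := by simp [hp, hk₁]
  have hpout : ∀ j : Fin κ, ¬(k ≤ j.val ∧ j.val ≤ k + 1) → p j = P j := by
    intro j hj; simp [hp, hj]
  have hp0 : ∀ j, 0 ≤ p j := by
    intro j
    by_cases hj : k ≤ j.val ∧ j.val ≤ k + 1
    · simp [hp, hj, hc0]
    · rw [hpout j hj]; exact hP0 j
  have hpmono : Monotone p := by
    intro i j hij
    by_cases hi : k ≤ i.val ∧ i.val ≤ k + 1 <;>
      by_cases hj : k ≤ j.val ∧ j.val ≤ k + 1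
    · simp [hp, hi, hj]
    · -- i in band, j out: j.val > k + 1
      have hij' : i.val ≤ j.val := hij
      have hjgt : k + 1 < j.val := by omega
      have : P k₁ ≤ P j := hPmono (show k₁ ≤ j by rw [Fin.le_def]; exact hjgt.le)
      simp only [hp, hi, hj, if_true, if_false, if_pos hi, if_neg hj]
      calc c ≤ b := hcb
        _ ≤ P j := this
    · -- i out, j in band: i.val < k
      have hij' : i.val ≤ j.val := hij
      have hilt : i.val < k := by omega
      have : P i ≤ P k₀ := hPmono (show i ≤ k₀ by rw [Fin.le_def]; exact hilt.le)
      simp only [hp, if_neg hi, if_pos hj]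
      calc P i ≤ a := this
        _ ≤ c := hac
    · simp only [hp, if_neg hi, if_neg hj]
      exact hPmono hij
  -- objective does not increase: key inequalities from convexity
  have hm₁m₀ : m₁ < p' k₀ := hdec
  have hFk₀c : F k₀ c ≤ F k₀ a := by
    rcases le_or_gt m₁ a with h | h
    · have hca : c = a := by
        rw [hc]
        exact max_eq_left (le_trans (min_le_right _ _) h)
      rw [hca]
    · have hcm₀ : c ≤ p' k₀ := by
        have h1 : min b m₁ ≤ m₁ := min_le_right _ _
        have h2 : c ≤ m₁ := max_le h.le h1
        linarith
      exact convex_le_of_mem_uIcc (F k₀) (hFconv k₀) (hmin k₀ a (hP0 k₀))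
        (Set.mem_uIcc.2 (Or.inr ⟨hac, hcm₀⟩))
  have hFk₁c : F k₁ c ≤ F k₁ b := by
    refine convex_le_of_mem_uIcc (F k₁) (hFconv k₁) (hmin k₁ b (hP0 k₁)) ?_
    rcases le_total m₁ b with h | h
    · refine Set.mem_uIcc.2 (Or.inl ⟨?_, hcb⟩)
      rw [hc, min_eq_right h]
      exact le_max_right _ _
    · have hcb' : c = b := by
        rw [hc, min_eq_left h]
        exact max_eq_right hab
      exact Set.mem_uIcc.2 (Or.inr ⟨hcb'.ge, hcb' ▸ h⟩)
  have hobjle : psObj κ Dk r t p ≤ psObj κ Dk r t P := by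
    rw [hobj, hobj]
    refine Finset.sum_le_sum fun j _ => ?_
    by_cases hj : k ≤ j.val ∧ j.val ≤ k + 1
    · have hjk : j = k₀ ∨ j = k₁ := by
        have : j.val = k ∨ j.val = k + 1 := by omega
        rcases this with h | h
        · exact Or.inl (Fin.ext h)
        · exact Or.inr (Fin.ext h)
      rcases hjk with rfl | rfl
      · rw [hpk₀]; exact hFk₀c
      · rw [hpk₁]; exact hFk₁c
    · rw [hpout j hj]
  refine ⟨p, hp0, hpmono, ?_, ?_⟩
  · intro q hq0 hqm
    exact le_trans hobjle (hPopt q hq0 hqm)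
  · rw [hpk₀, hpk₁]
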